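/- arXiv:2403.09348 — 4 statements merged into one kernel-verified Lean document; each statement's English description precedes it below -/
import Mathlib

section
/- For each partition λ of n, let p_λ denote the product of power sums p_{λ_j} = x_1^{λ_j} + ... + x_n^{λ_j}. Then the monomial x_1·x_2·...·x_n equals the sum over all partitions λ of n of (-1)^{n+ℓ(λ)} · (1 / ∏_i (k_i! · m_i^{k_i})) · p_λ, where λ has k_i parts equal to m_i and ℓ(λ) is the length of λ. -/
open MvPolynomial Finset

namespace PsumExpandAux

/-- coefficient of a partition (as a multiset) -/
def c (s : Multiset ℕ) : ℚ :=
  (-1 : ℚ) ^ (s.sum + Multiset.card s) *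
    (∏ a ∈ s.toFinset, ((s.count a).factorial * (a : ℚ) ^ s.count a))⁻¹

noncomputable def P (n : ℕ) (s : Multiset ℕ) : MvPolynomial (Fin n) ℚ :=
  (s.map fun j => MvPolynomial.psum (Fin n) ℚ j).prod

lemma msum_eq (s : Multiset ℕ) : s.sum = ∑ a ∈ s.toFinset, s.count a * a := by
  conv_lhs => rw [← Multiset.toFinset_sum_count_nsmul_eq s]
  rw [Multiset.sum_sum]
  simp [Multiset.sum_nsmul]

lemma zprod_ne_zero (s : Multiset ℕ) (hs : ∀ i ∈ s, 0 < i) :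
    (∏ a ∈ s.toFinset, ((s.count a).factorial * (a : ℚ) ^ s.count a)) ≠ 0 := by
  apply Finset.prod_ne_zero_iff.mpr
  intro a ha
  have ha' : 0 < a := hs a (Multiset.mem_toFinset.mp ha)
  positivity

lemma zprod_erase (s : Multiset ℕ) (j : ℕ) (hj : j ∈ s) (hs : ∀ i ∈ s, 0 < i) :
    (∏ a ∈ s.toFinset, ((s.count a).factorial * (a : ℚ) ^ s.count a))
      = (j : ℚ) * s.count j *
        ∏ a ∈ (s.erase j).toFinset, (((s.erase j).count a).factorial *
          (a : ℚ) ^ (s.erase j).count a) := by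
  classical
  have hcnt : 0 < s.count j := Multiset.count_pos.mpr hj
  have hcj : (s.erase j).count j = s.count j - 1 := Multiset.count_erase_self j s
  have hcne : ∀ a, a ≠ j → (s.erase j).count a = s.count a := fun a ha =>
    Multiset.count_erase_of_ne ha s
  have hoff : ∏ a ∈ s.toFinset.erase j, (((s.erase j).count a).factorial *
        (a : ℚ) ^ (s.erase j).count a)
      = ∏ a ∈ s.toFinset.erase j, ((s.count a).factorial * (a : ℚ) ^ s.count a) :=
    Finset.prod_congr rfl fun a ha => by rw [hcne a (Finset.ne_of_mem_erase ha)]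
  by_cases h1 : s.count j = 1
  · have hT : (s.erase j).toFinset = s.toFinset.erase j := by
      ext a
      by_cases hae : a = j
      · subst hae
        have hnm : a ∉ s.erase a := by
          intro hmem
          have := Multiset.count_pos.mpr hmem
          omega
        simp [Multiset.mem_toFinset, hnm]
      · simp [Multiset.mem_toFinset, Finset.mem_erase, hae, Multiset.mem_erase_of_ne hae]
    rw [← Finset.mul_prod_erase _ _ (Multiset.mem_toFinset.mpr hj), hT, hoff, h1]
    norm_num
  · have hc2 : 2 ≤ s.count j := by omega
    have hT : (s.erase j).toFinset = s.toFinset := by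
      ext a
      by_cases hae : a = j
      · subst hae
        have hm2 : a ∈ s.erase a := Multiset.count_pos.mp (by omega)
        simp [Multiset.mem_toFinset, hm2, hj]
      · simp [Multiset.mem_toFinset, Multiset.mem_erase_of_ne hae]
    rw [hT, ← Finset.mul_prod_erase _ _ (Multiset.mem_toFinset.mpr hj),
      ← Finset.mul_prod_erase _ (fun a => (((s.erase j).count a).factorial *
        (a : ℚ) ^ (s.erase j).count a)) (Multiset.mem_toFinset.mpr hj), hoff]
    have hfac : ((s.count j).factorial : ℚ) * (j : ℚ) ^ s.count j
        = (j : ℚ) * s.count j * (((s.erase j).count j).factorial * (j : ℚ) ^ (s.erase j).count j) := by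
      rw [hcj]
      obtain ⟨m, hm⟩ : ∃ m, s.count j = m + 1 := ⟨s.count j - 1, by omega⟩
      rw [hm]
      simp [Nat.factorial_succ, pow_succ]
      push_cast
      ring
    rw [hfac]
    ring

/-- key scalar identity -/
lemma key_scalar (k : ℕ) (s : Multiset ℕ) (hsum : s.sum = k) (hs : ∀ i ∈ s, 0 < i)
    (j : ℕ) (hj : j ∈ s) :
    (-1 : ℚ) ^ (k + 1 + (k - j)) * c (s.erase j) = (j : ℚ) * s.count j * c s := by
  have hse : j + (s.erase j).sum = k := by
    rw [← Multiset.sum_cons, Multiset.cons_erase hj, hsum]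
  have hce : Multiset.card s = Multiset.card (s.erase j) + 1 := by
    rw [← Multiset.card_cons, Multiset.cons_erase hj]
  have hkj : k - j = (s.erase j).sum := by omega
  have hPe := zprod_ne_zero (s.erase j) (fun i hi => hs i (Multiset.mem_of_mem_erase hi))
  have hz := zprod_erase s j hj hs
  have hj0 : (0:ℚ) < j := by exact_mod_cast hs j hj
  have hc0 : (0:ℚ) < s.count j := by exact_mod_cast Multiset.count_pos.mpr hj
  rw [c, c, hsum, hz, hkj, hce]
  set d := (s.erase j).sum with hd
  set e := Multiset.card (s.erase j) with he
  set Pe := ∏ a ∈ (s.erase j).toFinset, (((s.erase j).count a).factorial *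
    (a : ℚ) ^ (s.erase j).count a) with hPedef
  subst hse
  have e1 : (-1:ℚ)^(j+d+1+d) * ((-1:ℚ)^(d+e) * Pe⁻¹) = (-1:ℚ)^(j+d+(e+1)) * Pe⁻¹ := by
    rw [← mul_assoc, ← pow_add,
      show (j+d+1+d)+(d+e) = (j+d+(e+1)) + 2*d by ring, pow_add, pow_mul]
    norm_num
  rw [e1, mul_inv, mul_inv]
  field_simp

lemma P_erase (n : ℕ) (s : Multiset ℕ) (j : ℕ) (hj : j ∈ s) :
    P n s = P n (s.erase j) * MvPolynomial.psum (Fin n) ℚ j := by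
  conv_lhs => rw [← Multiset.cons_erase hj]
  rw [P, P, Multiset.map_cons, Multiset.prod_cons]
  ring

/-- the set of part-multisets of partitions of k -/
def PQ (k : ℕ) : Finset (Multiset ℕ) :=
  (Finset.univ : Finset (Nat.Partition k)).image (·.parts)

lemma mem_PQ {k : ℕ} {s : Multiset ℕ} :
    s ∈ PQ k ↔ s.sum = k ∧ ∀ i ∈ s, 0 < i := by
  constructor
  · rintro hs
    obtain ⟨lam, -, rfl⟩ := Finset.mem_image.mp hs
    exact ⟨lam.parts_sum, fun i hi => lam.parts_pos hi⟩
  · rintro ⟨h1, h2⟩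
    exact Finset.mem_image.mpr ⟨⟨s, fun hi => h2 _ hi, h1⟩, Finset.mem_univ _, rfl⟩

lemma sum_partition_eq {M : Type*} [AddCommMonoid M] (k : ℕ) (f : Multiset ℕ → M) :
    ∑ lam : Nat.Partition k, f lam.parts = ∑ s ∈ PQ k, f s := by
  rw [PQ, Finset.sum_image]
  intro a _ b _ h
  exact Nat.Partition.ext h

lemma P_cons (n : ℕ) (a : ℕ) (s : Multiset ℕ) :
    P n (a ::ₘ s) = MvPolynomial.psum (Fin n) ℚ a * P n s := by
  rw [P, P, Multiset.map_cons, Multiset.prod_cons]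

/-- main induction -/
theorem esymm_eq (n : ℕ) : ∀ k : ℕ,
    MvPolynomial.esymm (Fin n) ℚ k = ∑ s ∈ PQ k, c s • P n s := by
  intro k
  induction k using Nat.strong_induction_on with
  | _ k ih =>
  rcases Nat.eq_zero_or_pos k with rfl | hk
  · have hPQ : PQ 0 = {0} := by
      ext s
      simp only [mem_PQ, Finset.mem_singleton]
      constructor
      · rintro ⟨h1, h2⟩
        refine Multiset.eq_zero_of_forall_notMem fun a ha => ?_
        have h3 := h2 a ha
        have h4 : a = 0 := Multiset.sum_eq_zero_iff.mp h1 a ha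
        omega
      · rintro rfl
        simp
    rw [hPQ, Finset.sum_singleton]
    simp [c, P, MvPolynomial.esymm_zero]
  · have hk0 : (k:ℚ) ≠ 0 := Nat.cast_ne_zero.mpr hk.ne'
    have hN := MvPolynomial.mul_esymm_eq_sum (Fin n) ℚ k
    have hW : (k:ℚ) • MvPolynomial.esymm (Fin n) ℚ k
        = ∑ a ∈ Finset.range k, ((-1:ℚ)^(k+1+a)) •
            (MvPolynomial.esymm (Fin n) ℚ a * MvPolynomial.psum (Fin n) ℚ (k-a)) := by
      rw [MvPolynomial.smul_eq_C_mul, map_natCast, hN, Finset.sum_filter,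
        Finset.Nat.sum_antidiagonal_eq_sum_range_succ_mk, Finset.sum_range_succ]
      simp only [lt_self_iff_false, if_false]
      rw [add_zero, Finset.mul_sum]
      refine Finset.sum_congr rfl fun a ha => ?_
      rw [if_pos (Finset.mem_range.mp ha), MvPolynomial.smul_eq_C_mul, map_pow, map_neg,
        map_one, pow_add (-1 : MvPolynomial (Fin n) ℚ)]
      ring
    have hW2 : (k:ℚ) • MvPolynomial.esymm (Fin n) ℚ k
        = ∑ x ∈ (Finset.range k).sigma (fun a => PQ a),
            ((-1:ℚ)^(k+1+x.1) * c x.2) • P n ((k - x.1) ::ₘ x.2) := by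
      rw [hW, Finset.sum_sigma]
      refine Finset.sum_congr rfl fun a ha => ?_
      rw [ih a (Finset.mem_range.mp ha), Finset.sum_mul, Finset.smul_sum]
      refine Finset.sum_congr rfl fun t ht => ?_
      dsimp only
      rw [smul_mul_assoc, smul_smul, P_cons, mul_comm (P n t)]
    have hL : (k:ℚ) • (∑ s ∈ PQ k, c s • P n s)
        = ∑ x ∈ (PQ k).sigma (fun s => s.toFinset),
            ((x.2 : ℚ) * x.1.count x.2 * c x.1) • P n x.1 := by
      rw [Finset.smul_sum, Finset.sum_sigma]
      refine Finset.sum_congr rfl fun s hs => ?_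
      rw [smul_smul]
      obtain ⟨hsum, hpos⟩ := mem_PQ.mp hs
      have hks : (k:ℚ) = ∑ j ∈ s.toFinset, ((j:ℚ) * s.count j) := by
        rw [← hsum, msum_eq]
        push_cast
        exact Finset.sum_congr rfl fun j _ => by ring
      rw [hks, Finset.sum_mul, Finset.sum_smul]
    have hB : (∑ x ∈ (PQ k).sigma (fun s => s.toFinset),
            ((x.2 : ℚ) * x.1.count x.2 * c x.1) • P n x.1)
        = ∑ x ∈ (Finset.range k).sigma (fun a => PQ a),
            ((-1:ℚ)^(k+1+x.1) * c x.2) • P n ((k - x.1) ::ₘ x.2) := by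
      refine Finset.sum_nbij' (fun x => ⟨k - x.2, x.1.erase x.2⟩)
        (fun y => ⟨(k - y.1) ::ₘ y.2, k - y.1⟩) ?_ ?_ ?_ ?_ ?_
      · rintro ⟨s, j⟩ hx
        dsimp only
        obtain ⟨hx1, hx2⟩ := Finset.mem_sigma.mp hx
        obtain ⟨hsum, hpos⟩ := mem_PQ.mp hx1
        have hjs : j ∈ s := Multiset.mem_toFinset.mp hx2
        have hje : j + (s.erase j).sum = k := by
          rw [← Multiset.sum_cons, Multiset.cons_erase hjs, hsum]
        have hj0 : 0 < j := hpos j hjs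
        refine Finset.mem_sigma.mpr ⟨?_, ?_⟩
        · show k - j ∈ Finset.range k
          exact Finset.mem_range.mpr (by omega)
        · show s.erase j ∈ PQ (k - j)
          exact mem_PQ.mpr ⟨by omega, fun i hi => hpos i (Multiset.mem_of_mem_erase hi)⟩
      · rintro ⟨a, t⟩ hy
        dsimp only
        obtain ⟨hy1, hy2⟩ := Finset.mem_sigma.mp hy
        obtain ⟨hsum, hpos⟩ := mem_PQ.mp hy2
        have hsum' : t.sum = a := hsum
        have ha : a < k := Finset.mem_range.mp hy1
        refine Finset.mem_sigma.mpr ⟨?_, ?_⟩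
        · show (k - a) ::ₘ t ∈ PQ k
          refine mem_PQ.mpr ⟨?_, ?_⟩
          · rw [Multiset.sum_cons, hsum']
            omega
          · intro i hi
            rcases Multiset.mem_cons.mp hi with rfl | hit
            · omega
            · exact hpos i hit
        · show k - a ∈ ((k - a) ::ₘ t).toFinset
          exact Multiset.mem_toFinset.mpr (Multiset.mem_cons_self _ _)
      · rintro ⟨s, j⟩ hx
        dsimp only
        obtain ⟨hx1, hx2⟩ := Finset.mem_sigma.mp hx
        obtain ⟨hsum, hpos⟩ := mem_PQ.mp hx1
        have hjs : j ∈ s := Multiset.mem_toFinset.mp hx2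
        have hje : j + (s.erase j).sum = k := by
          rw [← Multiset.sum_cons, Multiset.cons_erase hjs, hsum]
        have hkk : k - (k - j) = j := by omega
        simp only [hkk, Multiset.cons_erase hjs]
      · rintro ⟨a, t⟩ hy
        obtain ⟨hy1, hy2⟩ := Finset.mem_sigma.mp hy
        have ha : a < k := Finset.mem_range.mp hy1
        have hkk : k - (k - a) = a := by omega
        simp only [Multiset.erase_cons_head, hkk]
      · rintro ⟨s, j⟩ hx
        dsimp only
        obtain ⟨hx1, hx2⟩ := Finset.mem_sigma.mp hx
        obtain ⟨hsum, hpos⟩ := mem_PQ.mp hx1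
        have hjs : j ∈ s := Multiset.mem_toFinset.mp hx2
        have hje : j + (s.erase j).sum = k := by
          rw [← Multiset.sum_cons, Multiset.cons_erase hjs, hsum]
        have hkk : k - (k - j) = j := by omega
        rw [hkk, Multiset.cons_erase hjs, key_scalar k s hsum hpos j hjs]
    have hS : (k:ℚ) • (∑ s ∈ PQ k, c s • P n s)
        = (k:ℚ) • MvPolynomial.esymm (Fin n) ℚ k := by
      rw [hL, hB, ← hW2]
    have h2 := congrArg (fun x => (k:ℚ)⁻¹ • x) hS
    simp only [smul_smul, inv_mul_cancel₀ hk0, one_smul] at h2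
    exact h2.symm

end PsumExpandAux

/-- Power-sum expansion of the monomial `x₁ ⋯ xₙ` (the elementary symmetric polynomial `eₙ`):
`x₁⋯xₙ = ∑_{|λ|=n} (-1)^{n+ℓ(λ)} (∏ᵢ kᵢ! mᵢ^{kᵢ})⁻¹ p_λ`, where the sum runs over
partitions `λ` of `n`, `mᵢ` are the distinct parts of `λ`, `kᵢ` their multiplicities and
`ℓ(λ)` the number of parts. -/
theorem prod_X_eq_sum_partitions_psum (n : ℕ) (hn : 0 < n) :
    (∏ i : Fin n, MvPolynomial.X i : MvPolynomial (Fin n) ℚ)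
      = ∑ lam : Nat.Partition n,
          ((-1 : ℚ) ^ (n + Multiset.card lam.parts) *
              (∏ a ∈ lam.parts.toFinset,
                ((lam.parts.count a).factorial * (a : ℚ) ^ lam.parts.count a))⁻¹)
            • (lam.parts.map fun j => MvPolynomial.psum (Fin n) ℚ j).prod := by
  have h := PsumExpandAux.esymm_eq n n
  rw [← PsumExpandAux.sum_partition_eq n
    (fun s => PsumExpandAux.c s • PsumExpandAux.P n s)] at h
  have h2 : (Finset.univ : Finset (Fin n)).powersetCard n = {Finset.univ} := by
    simpa using Finset.powersetCard_self (Finset.univ : Finset (Fin n))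
  rw [MvPolynomial.esymm, h2, Finset.sum_singleton] at h
  rw [h]
  refine Finset.sum_congr rfl fun lam _ => ?_
  rw [PsumExpandAux.c, lam.parts_sum]
  rfl
end

section
/- For a homogeneous polynomial f_k of degree k in n variables: if k is odd then ∫_{S^{n-1}} f_k dS = 0, and if k is even then ∫_{S^{n-1}} f_k dS = ((n-2)!! · vol(S^{n-1}) / (k!! · (n+k-2)!!)) · Δ^{k/2}(f_k), where Δ^{k/2}(f_k) is a constant. -/
open MvPolynomial Finset Metric MeasureTheory Nat Real Set Filter

noncomputable def gw (t : ℝ) : ℝ := Real.exp (-(1/2) * t^2)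

lemma gw_pos (t : ℝ) : 0 < gw t := Real.exp_pos _

lemma integrable_pow_gw (m : ℕ) : Integrable fun x : ℝ => x ^ m * gw x := by
  have h := integrable_rpow_mul_exp_neg_mul_sq (b := 1/2) (by norm_num) (s := (m : ℝ))
    (lt_of_lt_of_le (by norm_num) (Nat.cast_nonneg m))
  simpa [gw, Real.rpow_natCast] using h

lemma tendsto_pow_gw_atTop (m : ℕ) :
    Tendsto (fun x : ℝ => x ^ m * gw x) atTop (nhds 0) := by
  have h := tendsto_rpow_abs_mul_exp_neg_mul_sq_cocompact (a := 1/2) (by norm_num) (m : ℝ)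
  have h2 : Tendsto (fun x : ℝ => |x| ^ m * Real.exp (-(1/2) * x ^ 2)) (cocompact ℝ) (nhds 0) := by
    simpa [Real.rpow_natCast] using h
  have h3 : Tendsto (fun x : ℝ => x ^ m * gw x) (cocompact ℝ) (nhds 0) := by
    apply squeeze_zero_norm (fun x => ?_) h2
    simp [gw, abs_mul, abs_pow, Real.abs_exp]
  exact h3.mono_left (by rw [cocompact_eq_atBot_atTop]; exact le_sup_right)

lemma tendsto_pow_gw_atBot (m : ℕ) :
    Tendsto (fun x : ℝ => x ^ m * gw x) atBot (nhds 0) := by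
  have h := tendsto_rpow_abs_mul_exp_neg_mul_sq_cocompact (a := 1/2) (by norm_num) (m : ℝ)
  have h2 : Tendsto (fun x : ℝ => |x| ^ m * Real.exp (-(1/2) * x ^ 2)) (cocompact ℝ) (nhds 0) := by
    simpa [Real.rpow_natCast] using h
  have h3 : Tendsto (fun x : ℝ => x ^ m * gw x) (cocompact ℝ) (nhds 0) := by
    apply squeeze_zero_norm (fun x => ?_) h2
    simp [gw, abs_mul, abs_pow, Real.abs_exp]
  exact h3.mono_left (by rw [cocompact_eq_atBot_atTop]; exact le_sup_left)

lemma hasDerivAt_gw (x : ℝ) : HasDerivAt gw (-x * gw x) x := by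
  have h : HasDerivAt (fun t : ℝ => -(1/2) * t^2) (-(1/2) * (2 * x^1)) x :=
    (hasDerivAt_pow 2 x).const_mul _
  unfold gw
  convert h.exp using 1
  ring

lemma hasDerivAt_pow_gw (m : ℕ) (x : ℝ) :
    HasDerivAt (fun x : ℝ => x ^ (m+1) * gw x)
      (((m+1 : ℝ) * x ^ m - x ^ (m+2)) * gw x) x := by
  have h := (hasDerivAt_pow (m+1) x).mul (hasDerivAt_gw x)
  refine h.congr_deriv ?_
  simp only [Nat.add_sub_cancel]
  push_cast
  ring

noncomputable def Mm (m : ℕ) : ℝ := ∫ x : ℝ, x ^ m * gw x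

noncomputable def Jm (m : ℕ) : ℝ := ∫ x in Ioi (0:ℝ), x ^ m * gw x

lemma Mm_rec (m : ℕ) : Mm (m + 2) = (m + 1 : ℝ) * Mm m := by
  have key : (∫ x : ℝ, ((m+1 : ℝ) * x ^ m - x ^ (m+2)) * gw x) = 0 - 0 := by
    refine integral_of_hasDerivAt_of_tendsto (fun x => hasDerivAt_pow_gw m x) ?_ ?_ ?_
    · have := ((integrable_pow_gw m).const_mul (m+1:ℝ)).sub (integrable_pow_gw (m+2))
      simpa [sub_mul, mul_assoc, Pi.sub_def] using this
    · exact tendsto_pow_gw_atBot (m+1)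
    · exact tendsto_pow_gw_atTop (m+1)
  have expand : (∫ x : ℝ, ((m+1 : ℝ) * x ^ m - x ^ (m+2)) * gw x)
      = (m+1:ℝ) * Mm m - Mm (m+2) := by
    rw [Mm, Mm, ← integral_const_mul, ← integral_sub ((integrable_pow_gw m).const_mul _)
      (integrable_pow_gw (m+2))]
    congr 1; ext x; ring
  have := expand ▸ key
  linarith

lemma Mm_one : Mm 1 = 0 := by
  have key : (∫ x : ℝ, x ^ 1 * gw x) = 0 - 0 := by
    refine integral_of_hasDerivAt_of_tendsto (f := fun x => -gw x)
      (fun x => ?_) ?_ ?_ ?_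
    · simpa [pow_one, Pi.neg_def] using (hasDerivAt_gw x).neg
    · simpa using integrable_pow_gw 1
    · simpa using (tendsto_pow_gw_atBot 0).neg.comp tendsto_id |>.congr (by simp [gw])
    · simpa using (tendsto_pow_gw_atTop 0).neg.comp tendsto_id |>.congr (by simp [gw])
  simpa [Mm] using key

lemma Mm_odd {m : ℕ} (hm : Odd m) : Mm m = 0 := by
  obtain ⟨j, rfl⟩ := hm
  induction j with
  | zero => simpa using Mm_one
  | succ i ih =>
      have : 2 * (i+1) + 1 = (2*i+1) + 2 := by ring
      rw [this, Mm_rec, ih]; ring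

lemma Jm_rec (m : ℕ) : Jm (m + 2) = (m + 1 : ℝ) * Jm m := by
  have key : (∫ x in Ioi (0:ℝ), ((m+1 : ℝ) * x ^ m - x ^ (m+2)) * gw x)
      = 0 - (0:ℝ)^(m+1) * gw 0 := by
    refine integral_Ioi_of_hasDerivAt_of_tendsto' (fun x _ => hasDerivAt_pow_gw m x) ?_ ?_
    · have := (((integrable_pow_gw m).const_mul (m+1:ℝ)).sub (integrable_pow_gw (m+2))).integrableOn
        (s := Ioi (0:ℝ))
      refine this.congr_fun (fun x _ => ?_) measurableSet_Ioi
      simp only [Pi.sub_apply]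
      ring
    · exact tendsto_pow_gw_atTop (m+1)
  have expand : (∫ x in Ioi (0:ℝ), ((m+1 : ℝ) * x ^ m - x ^ (m+2)) * gw x)
      = (m+1:ℝ) * Jm m - Jm (m+2) := by
    rw [Jm, Jm, ← integral_const_mul, ← integral_sub
      (((integrable_pow_gw m).const_mul _).integrableOn) ((integrable_pow_gw (m+2)).integrableOn)]
    congr 1; ext x; ring
  rw [expand] at key
  simp at key
  linarith

lemma Jm_pos (m : ℕ) : 0 < Jm m := by
  rw [Jm]
  apply setIntegral_pos_iff_support_of_nonneg_ae ?_ ?_ |>.mpr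
  · have : (Function.support fun x : ℝ => x ^ m * gw x) ∩ Set.Ioi 0 = Set.Ioi 0 := by
      apply inter_eq_self_of_subset_right
      intro x hx
      have hx' : (0:ℝ) < x := hx
      exact (mul_pos (pow_pos hx' m) (gw_pos x)).ne'
    rw [this]
    simp
  · filter_upwards [ae_restrict_mem measurableSet_Ioi] with x hx
    have hx' : (0:ℝ) < x := hx
    exact (mul_pos (pow_pos hx' m) (gw_pos x)).le
  · exact (integrable_pow_gw m).integrableOn

noncomputable def Gi (n : ℕ) (p : MvPolynomial (Fin n) ℝ) : ℝ :=
  ∫ x : EuclideanSpace ℝ (Fin n), MvPolynomial.eval (fun i => x i) p * gw ‖x‖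

variable {n : ℕ}

lemma gw_norm (x : EuclideanSpace ℝ (Fin n)) : gw ‖x‖ = ∏ i, gw (x i) := by
  have hx : ‖x‖ ^ 2 = ∑ i, x i ^ 2 := by
    rw [EuclideanSpace.norm_eq]
    rw [Real.sq_sqrt (Finset.sum_nonneg fun i _ => sq_nonneg _)]
    simp [Real.norm_eq_abs, sq_abs]
  simp only [gw]
  rw [hx, Finset.mul_sum, Real.exp_sum]

lemma eval_monomial_mul_gw (d : Fin n →₀ ℕ) (c : ℝ) (x : EuclideanSpace ℝ (Fin n)) :
    MvPolynomial.eval (fun i => x i) (monomial d c) * gw ‖x‖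
      = c * ∏ i, (x i ^ d i * gw (x i)) := by
  rw [eval_monomial, gw_norm, Finsupp.prod_fintype _ _ (fun i => pow_zero _),
    Finset.prod_mul_distrib]
  ring

lemma integrable_monomial_gw (d : Fin n →₀ ℕ) (c : ℝ) :
    Integrable (fun x : EuclideanSpace ℝ (Fin n) =>
      MvPolynomial.eval (fun i => x i) (monomial d c) * gw ‖x‖) := by
  simp only [eval_monomial_mul_gw]
  have hmp := (EuclideanSpace.volume_preserving_symm_measurableEquiv_toLp (ι := Fin n)).symm
  rw [← MeasurePreserving.integrable_comp_emb hmp (MeasurableEquiv.measurableEmbedding _)]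
  have : Integrable (fun v : Fin n → ℝ => c * ∏ i, (v i ^ d i * gw (v i))) :=
    (Integrable.fintype_prod (f := fun i (t : ℝ) => t ^ d i * gw t)
      (fun i => integrable_pow_gw (d i))).const_mul c
  apply this.congr
  filter_upwards with v
  simp [Function.comp]

lemma Gi_monomial (d : Fin n →₀ ℕ) (c : ℝ) :
    Gi n (monomial d c) = c * ∏ i, Mm (d i) := by
  rw [Gi]
  simp only [eval_monomial_mul_gw]
  have hmp := (EuclideanSpace.volume_preserving_symm_measurableEquiv_toLp (ι := Fin n)).symm
  rw [← hmp.integral_comp (MeasurableEquiv.measurableEmbedding _)]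
  have heq : ∀ v : Fin n → ℝ,
      c * ∏ i, (((MeasurableEquiv.toLp 2 (Fin n → ℝ)).symm.symm v) i ^ d i
        * gw (((MeasurableEquiv.toLp 2 (Fin n → ℝ)).symm.symm v) i))
      = c * ∏ i, (v i ^ d i * gw (v i)) := by
    intro v
    simp
  rw [integral_congr_ae (Filter.Eventually.of_forall heq)]
  rw [integral_const_mul, integral_fintype_prod_volume_eq_prod
    (f := fun i (t : ℝ) => t ^ d i * gw t)]
  rfl

lemma eval_as_sum (p : MvPolynomial (Fin n) ℝ) (y : Fin n → ℝ) :
    MvPolynomial.eval y p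
      = ∑ d ∈ p.support, MvPolynomial.eval y (monomial d (coeff d p)) := by
  conv_lhs => rw [p.as_sum]
  rw [map_sum]

lemma integrable_eval_gw (p : MvPolynomial (Fin n) ℝ) :
    Integrable (fun x : EuclideanSpace ℝ (Fin n) =>
      MvPolynomial.eval (fun i => x i) p * gw ‖x‖) := by
  have : (fun x : EuclideanSpace ℝ (Fin n) =>
      MvPolynomial.eval (fun i => x i) p * gw ‖x‖)
      = fun x => ∑ d ∈ p.support,
          MvPolynomial.eval (fun i => x i) (monomial d (coeff d p)) * gw ‖x‖ := by
    funext x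
    rw [eval_as_sum p, Finset.sum_mul]
  rw [this]
  exact integrable_finset_sum _ (fun d _ => integrable_monomial_gw d _)

lemma Gi_sum {ι : Type*} (s : Finset ι) (q : ι → MvPolynomial (Fin n) ℝ) :
    Gi n (∑ a ∈ s, q a) = ∑ a ∈ s, Gi n (q a) := by
  unfold Gi
  have : ∀ x : EuclideanSpace ℝ (Fin n),
      MvPolynomial.eval (fun i => x i) (∑ a ∈ s, q a) * gw ‖x‖
      = ∑ a ∈ s, MvPolynomial.eval (fun i => x i) (q a) * gw ‖x‖ := by
    intro x; rw [map_sum, Finset.sum_mul]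
  rw [integral_congr_ae (Filter.Eventually.of_forall this)]
  exact integral_finset_sum _ (fun a _ => integrable_eval_gw (q a))

lemma sum_univ_of_mem_support {p : MvPolynomial (Fin n) ℝ} {k : ℕ}
    (hp : p.IsHomogeneous k) {d : Fin n →₀ ℕ} (hd : d ∈ p.support) :
    ∑ i, d i = k := by
  have h1 : (Finsupp.weight 1) d = k := hp (mem_support_iff.1 hd)
  have h2 : d.degree = k := by rw [Finsupp.degree_eq_weight_one]; exact h1
  rw [← h2, Finsupp.degree]
  exact (Finset.sum_subset (Finset.subset_univ _)
    (fun i _ hi => Finsupp.notMem_support_iff.1 hi)).symm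

lemma Gi_pderiv2_monomial (i : Fin n) (d : Fin n →₀ ℕ) (c : ℝ) :
    Gi n (pderiv i (pderiv i (monomial d c))) = (d i : ℝ) * Gi n (monomial d c) := by
  classical
  rw [pderiv_monomial, pderiv_monomial, Gi_monomial, Gi_monomial]
  have key : ∀ dd : Fin n →₀ ℕ, ∏ j, Mm (dd j) = Mm (dd i) * ∏ j ∈ univ.erase i, Mm (dd j) :=
    fun dd => (Finset.mul_prod_erase univ (fun j => Mm (dd j)) (mem_univ i)).symm
  rw [key, key d]
  have hrest : ∀ j : Fin n, j ∈ univ.erase i →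
      Mm ((d - Finsupp.single i 1 - Finsupp.single i 1 : Fin n →₀ ℕ) j) = Mm (d j) := by
    intro j hj
    have hji : j ≠ i := Finset.ne_of_mem_erase hj
    rw [Finsupp.tsub_apply, Finsupp.tsub_apply, Finsupp.single_eq_of_ne' (Ne.symm hji)]
    simp
  rw [Finset.prod_congr rfl hrest]
  simp only [Finsupp.tsub_apply, Finsupp.single_eq_same]
  rcases he : d i with _ | e
  · simp
  · rcases e with _ | e
    · simp [Mm_one]
    · have h1 : e + 1 + 1 - 1 - 1 = e := rfl
      have h2 : e + 1 + 1 - 1 = e + 1 := rfl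
      rw [h1, h2, show e + 1 + 1 = e + 2 from rfl, Mm_rec]
      push_cast
      ring

lemma Gi_zero : Gi n 0 = 0 := by
  have := Gi_monomial (n := n) 0 (0:ℝ)
  simpa using this

lemma Gi_lap {k : ℕ} (p : MvPolynomial (Fin n) ℝ) (hp : p.IsHomogeneous k) :
    Gi n (∑ i, pderiv i (pderiv i p)) = (k : ℝ) * Gi n p := by
  calc Gi n (∑ i, pderiv i (pderiv i p))
      = ∑ i, ∑ d ∈ p.support, Gi n (pderiv i (pderiv i (monomial d (coeff d p)))) := by
        rw [Gi_sum]
        refine Finset.sum_congr rfl fun i _ => ?_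
        conv_lhs => rw [p.as_sum]
        rw [map_sum, map_sum, Gi_sum]
    _ = ∑ i, ∑ d ∈ p.support, (d i : ℝ) * Gi n (monomial d (coeff d p)) := by
        refine Finset.sum_congr rfl fun i _ => Finset.sum_congr rfl fun d _ => ?_
        rw [Gi_pderiv2_monomial]
    _ = ∑ d ∈ p.support, ∑ i, (d i : ℝ) * Gi n (monomial d (coeff d p)) := Finset.sum_comm
    _ = ∑ d ∈ p.support, (k : ℝ) * Gi n (monomial d (coeff d p)) := by
        refine Finset.sum_congr rfl fun d hd => ?_
        rw [← Finset.sum_mul]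
        congr 1
        rw [← Nat.cast_sum, sum_univ_of_mem_support hp hd]
    _ = (k : ℝ) * Gi n p := by
        rw [← Finset.mul_sum, ← Gi_sum, ← p.as_sum]

lemma degree_via_univ (dd : Fin n →₀ ℕ) : ∑ j, dd j = dd.degree := by
  rw [Finsupp.degree]
  exact (Finset.sum_subset (Finset.subset_univ _)
    (fun i _ hi => Finsupp.notMem_support_iff.1 hi)).symm

lemma isHomogeneous_pderiv {k : ℕ} {p : MvPolynomial (Fin n) ℝ}
    (hp : p.IsHomogeneous (k+1)) (i : Fin n) :
    (pderiv i p).IsHomogeneous k := by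
  classical
  conv_lhs => rw [p.as_sum]
  rw [map_sum]
  refine IsHomogeneous.sum _ _ _ fun d hd => ?_
  rw [pderiv_monomial]
  by_cases h0 : d i = 0
  · rw [h0]
    norm_num
    exact isHomogeneous_zero _ _ _
  · apply isHomogeneous_monomial
    have hsum : ∑ j, d j = k + 1 := sum_univ_of_mem_support hp hd
    have hsum' : d i + ∑ j ∈ univ.erase i, d j = k + 1 := by
      rw [Finset.add_sum_erase univ _ (mem_univ i)]
      exact hsum
    have heq : (univ.erase i).sum ⇑d = ∑ j ∈ univ.erase i, d j := rfl
    rw [heq] at hsum'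
    rw [← degree_via_univ, ← Finset.add_sum_erase univ _ (mem_univ i)]
    have hne : ∀ j ∈ univ.erase i, (d - Finsupp.single i 1 : Fin n →₀ ℕ) j = d j := by
      intro j hj
      have hji : j ≠ i := Finset.ne_of_mem_erase hj
      rw [Finsupp.tsub_apply, Finsupp.single_eq_of_ne' (Ne.symm hji)]
      simp
    rw [Finset.sum_congr rfl hne]
    have hii : (d - Finsupp.single i 1 : Fin n →₀ ℕ) i = d i - 1 := by
      rw [Finsupp.tsub_apply, Finsupp.single_eq_same]
    rw [hii]
    omega

lemma isHomogeneous_lap {k : ℕ} {p : MvPolynomial (Fin n) ℝ} (hp : p.IsHomogeneous (k+2)) :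
    (∑ i, pderiv i (pderiv i p)).IsHomogeneous k :=
  IsHomogeneous.sum _ _ _ fun i _ =>
    isHomogeneous_pderiv (isHomogeneous_pderiv (by simpa using hp) i) i

lemma Gi_iterate : ∀ (m : ℕ) (p : MvPolynomial (Fin n) ℝ), p.IsHomogeneous (2*m) →
    (((2*m)‼ : ℕ) : ℝ) * Gi n p
      = MvPolynomial.eval 0 ((fun g : MvPolynomial (Fin n) ℝ =>
          ∑ i, pderiv i (pderiv i g))^[m] p) * Gi n 1
  | 0, p, hp => by
    have hdf : (2*0)‼ = 1 := rfl
    simp only [Function.iterate_zero, id_eq, hdf, Nat.cast_one, one_mul]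
    have hsupp : p.support ⊆ {0} := by
      intro d hd
      have hsum : ∑ i, d i = 0 := sum_univ_of_mem_support hp hd
      have : d = 0 := by
        ext j
        have := Finset.sum_eq_zero_iff.mp hsum j (mem_univ j)
        simpa using this
      simp [this]
    rcases Finset.subset_singleton_iff.mp hsupp with h | h
    · have hp0 : p = 0 := support_eq_empty.mp h
      simp [hp0, Gi_zero]
    · have hp0 : p = monomial 0 (coeff 0 p) := by
        conv_lhs => rw [p.as_sum]
        rw [h, Finset.sum_singleton]
      rw [hp0, Gi_monomial]
      have h1 : (1 : MvPolynomial (Fin n) ℝ) = monomial 0 (1:ℝ) := by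
        simp
      rw [h1, Gi_monomial]
      simp
  | m+1, p, hp => by
    have hp' : p.IsHomogeneous (2*m+2) := by
      rwa [show 2*(m+1) = 2*m+2 by ring] at hp
    have hL : (∑ i, pderiv i (pderiv i p)).IsHomogeneous (2*m) := isHomogeneous_lap hp'
    have ih := Gi_iterate m (∑ i, pderiv i (pderiv i p)) hL
    have hlap : Gi n (∑ i, pderiv i (pderiv i p)) = ((2*m+2 : ℕ) : ℝ) * Gi n p := by
      have := Gi_lap p hp'
      simpa using this
    rw [hlap] at ih
    rw [show (fun g : MvPolynomial (Fin n) ℝ =>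
          ∑ i, pderiv i (pderiv i g))^[m+1] p
        = (fun g : MvPolynomial (Fin n) ℝ =>
          ∑ i, pderiv i (pderiv i g))^[m] (∑ i, pderiv i (pderiv i p)) from
      Function.iterate_succ_apply _ _ _]
    rw [← ih]
    rw [show 2*(m+1) = 2*m+2 by ring, Nat.doubleFactorial_add_two]
    push_cast
    ring

variable {n : ℕ}

lemma eval_smul_eval {k : ℕ} {p : MvPolynomial (Fin n) ℝ} (hp : p.IsHomogeneous k)
    (c : ℝ) (x : EuclideanSpace ℝ (Fin n)) :
    MvPolynomial.eval (fun i => (c • x : EuclideanSpace ℝ (Fin n)) i) p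
      = c ^ k * MvPolynomial.eval (fun i => x i) p := by
  have hsmul : ∀ i, (c • x : EuclideanSpace ℝ (Fin n)) i = c * x i := fun i => rfl
  simp only [hsmul]
  rw [eval_eq', eval_eq', Finset.mul_sum]
  refine Finset.sum_congr rfl fun d hd => ?_
  simp_rw [mul_pow]
  rw [Finset.prod_mul_distrib, Finset.prod_pow_eq_pow_sum, sum_univ_of_mem_support hp hd]
  ring

lemma polar (hn : 0 < n) {k : ℕ} (p : MvPolynomial (Fin n) ℝ) (hp : p.IsHomogeneous k) :
    Gi n p = (∫ ω : sphere (0 : EuclideanSpace ℝ (Fin n)) 1,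
        MvPolynomial.eval (fun i => (ω : EuclideanSpace ℝ (Fin n)) i) p
        ∂((volume : Measure (EuclideanSpace ℝ (Fin n))).toSphere)) * Jm (n - 1 + k) := by
  classical
  haveI : Nonempty (Fin n) := Fin.pos_iff_nonempty.mp hn
  haveI : Nontrivial (EuclideanSpace ℝ (Fin n)) := inferInstance
  set E := EuclideanSpace ℝ (Fin n)
  set μ : Measure E := volume with hμ
  have hdim : Module.finrank ℝ E = n := finrank_euclideanSpace_fin
  set g : E → ℝ := fun x => MvPolynomial.eval (fun i => x i) p * gw ‖x‖ with hg
  have h1 : Gi n p = ∫ x : ({(0:E)}ᶜ : Set E), g x.1 ∂(μ.comap Subtype.val) := by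
    rw [Gi, integral_subtype_comap (measurableSet_singleton (0:E)).compl (fun x => g x),
      MeasureTheory.restrict_compl_singleton]
  have h2 : ∫ x : ({(0:E)}ᶜ : Set E), g x.1 ∂(μ.comap Subtype.val)
      = ∫ y : sphere (0:E) 1 × Ioi (0:ℝ),
          (MvPolynomial.eval (fun i => (y.1 : E) i) p * ((y.2 : ℝ)^k * gw y.2))
          ∂(μ.toSphere.prod (Measure.volumeIoiPow (Module.finrank ℝ E - 1))) := by
    rw [← (μ.measurePreserving_homeomorphUnitSphereProd).integral_comp
      (Homeomorph.measurableEmbedding _)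
      (fun y : sphere (0:E) 1 × Ioi (0:ℝ) =>
        MvPolynomial.eval (fun i => (y.1 : E) i) p * ((y.2 : ℝ)^k * gw y.2))]
    refine integral_congr_ae (Eventually.of_forall fun x => ?_)
    have hx : (x : E) ≠ 0 := x.2
    have hnorm : ‖(x:E)‖ ≠ 0 := norm_ne_zero_iff.mpr hx
    simp only [homeomorphUnitSphereProd_apply_fst_coe, homeomorphUnitSphereProd_apply_snd_coe]
    rw [eval_smul_eval hp]
    rw [hg]
    simp only [inv_pow]
    field_simp
  have h3 : ∫ y : sphere (0:E) 1 × Ioi (0:ℝ),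
          (MvPolynomial.eval (fun i => (y.1 : E) i) p * ((y.2 : ℝ)^k * gw y.2))
          ∂(μ.toSphere.prod (Measure.volumeIoiPow (Module.finrank ℝ E - 1)))
      = (∫ ω : sphere (0:E) 1, MvPolynomial.eval (fun i => (ω : E) i) p ∂μ.toSphere)
        * ∫ r : Ioi (0:ℝ), ((r : ℝ)^k * gw r) ∂(Measure.volumeIoiPow (Module.finrank ℝ E - 1)) :=
    integral_prod_mul (f := fun ω : sphere (0:E) 1 => MvPolynomial.eval (fun i => (ω : E) i) p)
      (g := fun r : Ioi (0:ℝ) => (r : ℝ)^k * gw r)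
  have h4 : (∫ r : Ioi (0:ℝ), ((r : ℝ)^k * gw r)
        ∂(Measure.volumeIoiPow (Module.finrank ℝ E - 1))) = Jm (n - 1 + k) := by
    rw [hdim]
    simp only [Measure.volumeIoiPow, ENNReal.ofReal]
    rw [integral_withDensity_eq_integral_smul
      ((measurable_subtype_coe.pow_const _).real_toNNReal) _,
      integral_subtype_comap measurableSet_Ioi
        (fun a : ℝ => (a ^ (n-1)).toNNReal • (a ^ k * gw a)), Jm]
    refine setIntegral_congr_fun measurableSet_Ioi fun x hx => ?_
    rw [NNReal.smul_def, Real.coe_toNNReal _ (pow_nonneg hx.out.le _), pow_add, smul_eq_mul]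
    ring
  rw [h1, h2, h3, h4]

variable {n : ℕ}

lemma Jm_ratio (q : ℕ) : ∀ m : ℕ, Jm (q+1+2*m) * ((q‼ : ℕ) : ℝ) = (((q+2*m)‼ : ℕ) : ℝ) * Jm (q+1)
  | 0 => by norm_num [mul_comm]
  | m+1 => by
    have h1 : q+1+2*(m+1) = (q+1+2*m)+2 := by ring
    have h2 : q+2*(m+1) = (q+2*m)+2 := by ring
    rw [h1, h2, Jm_rec, Nat.doubleFactorial_add_two]
    have ih := Jm_ratio q m
    push_cast
    push_cast at ih
    linear_combination ((q:ℝ)+2*m+2) * ih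

lemma Gi_odd {k : ℕ} (hk : Odd k) (p : MvPolynomial (Fin n) ℝ) (hp : p.IsHomogeneous k) :
    Gi n p = 0 := by
  conv_lhs => rw [p.as_sum]
  rw [Gi_sum]
  refine Finset.sum_eq_zero fun d hd => ?_
  rw [Gi_monomial]
  have hsum := sum_univ_of_mem_support hp hd
  have hodd : ∃ i, Odd (d i) := by
    by_contra h
    push_neg at h
    simp only [Nat.not_odd_iff_even] at h
    have heven : Even (∑ i, d i) := Finset.even_sum _ fun i _ => h i
    rw [hsum] at heven
    exact (Nat.not_even_iff_odd.mpr hk) heven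
  obtain ⟨i, hi⟩ := hodd
  rw [Finset.prod_eq_zero (mem_univ i) (Mm_odd hi), mul_zero]

/-- Integration of a homogeneous polynomial `f` of degree `k` over the unit sphere
`S^{n-1}`: the integral vanishes for odd `k`, and for even `k` it equals
`(n-2)‼ · vol(S^{n-1}) / (k‼ · (n+k-2)‼)` times the constant `Δ^{k/2} f`. -/
theorem integral_sphere_homogeneous (n k : ℕ) (hn : 2 ≤ n)
    (f : MvPolynomial (Fin n) ℝ) (hf : f.IsHomogeneous k) :
    (Odd k →
      ∫ x : sphere (0 : EuclideanSpace ℝ (Fin n)) 1,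
          MvPolynomial.eval (fun i => (x : EuclideanSpace ℝ (Fin n)) i) f
        ∂((volume : Measure (EuclideanSpace ℝ (Fin n))).toSphere) = 0) ∧
    (Even k →
      ∫ x : sphere (0 : EuclideanSpace ℝ (Fin n)) 1,
          MvPolynomial.eval (fun i => (x : EuclideanSpace ℝ (Fin n)) i) f
        ∂((volume : Measure (EuclideanSpace ℝ (Fin n))).toSphere)
      = ((n - 2)‼ *
            (((volume : Measure (EuclideanSpace ℝ (Fin n))).toSphere Set.univ).toReal) /
            (k‼ * (n + k - 2)‼)) *
          MvPolynomial.eval 0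
            ((fun g : MvPolynomial (Fin n) ℝ =>
              ∑ i : Fin n, pderiv i (pderiv i g))^[k / 2] f)) := by
  have hn0 : 0 < n := by omega
  constructor
  · intro hk
    have hpolar := polar hn0 f hf
    rw [Gi_odd hk f hf] at hpolar
    rcases mul_eq_zero.mp hpolar.symm with h | h
    · exact h
    · exact absurd h (Jm_pos _).ne'
  · intro hk
    obtain ⟨m, rfl⟩ := hk
    have hf' : f.IsHomogeneous (2*m) := by rwa [two_mul]
    have hiter := Gi_iterate m f hf'
    have hpolar := polar hn0 f hf
    have hpolar1 := polar hn0 (1 : MvPolynomial (Fin n) ℝ) (isHomogeneous_one _ _)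
    have hone : (∫ ω : sphere (0 : EuclideanSpace ℝ (Fin n)) 1,
        MvPolynomial.eval (fun i => (ω : EuclideanSpace ℝ (Fin n)) i)
          (1 : MvPolynomial (Fin n) ℝ)
        ∂((volume : Measure (EuclideanSpace ℝ (Fin n))).toSphere))
        = (((volume : Measure (EuclideanSpace ℝ (Fin n))).toSphere Set.univ).toReal) := by
      simp [Measure.real]
    rw [hone] at hpolar1
    obtain ⟨q, rfl⟩ : ∃ q, n = q + 2 := ⟨n - 2, by omega⟩
    rw [show q + 2 - 1 + (m + m) = q + 1 + 2*m from by omega] at hpolar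
    rw [show q + 2 - 1 + 0 = q + 1 from by omega] at hpolar1
    rw [show q + 2 - 2 = q from by omega, show q + 2 + (m + m) - 2 = q + 2*m from by omega,
      show (m + m) / 2 = m from by omega, show (m + m)‼ = (2*m)‼ from by rw [two_mul]]
    have hratio := Jm_ratio q m
    have hA : (((2*m)‼ : ℕ) : ℝ) ≠ 0 := Nat.cast_ne_zero.mpr (Nat.doubleFactorial_pos _).ne'
    have hD : (((q+2*m)‼ : ℕ) : ℝ) ≠ 0 := Nat.cast_ne_zero.mpr (Nat.doubleFactorial_pos _).ne'
    have hq2 : ((q‼ : ℕ) : ℝ) ≠ 0 := Nat.cast_ne_zero.mpr (Nat.doubleFactorial_pos _).ne'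
    have hJ1 : Jm (q+1) ≠ 0 := (Jm_pos _).ne'
    rw [hpolar, hpolar1] at hiter
    set S := ∫ x : sphere (0 : EuclideanSpace ℝ (Fin (q+2))) 1,
        MvPolynomial.eval (fun i => (x : EuclideanSpace ℝ (Fin (q+2))) i) f
        ∂((volume : Measure (EuclideanSpace ℝ (Fin (q+2)))).toSphere) with hS
    set V := (((volume : Measure (EuclideanSpace ℝ (Fin (q+2)))).toSphere Set.univ).toReal) with hV
    set c := MvPolynomial.eval 0
        ((fun g : MvPolynomial (Fin (q+2)) ℝ =>
          ∑ i : Fin (q+2), pderiv i (pderiv i g))^[m] f) with hc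
    -- hiter : (2m)‼ * (S * Jm (q+1+2m)) = c * (V * Jm (q+1))
    have hJ2eq : Jm (q+1+2*m) = (((q+2*m)‼ : ℕ) : ℝ) * Jm (q+1) / ((q‼ : ℕ) : ℝ) := by
      rw [eq_div_iff hq2]
      linear_combination hratio
    rw [hJ2eq] at hiter
    rw [div_mul_eq_mul_div, eq_div_iff (mul_ne_zero hA hD)]
    have h2 : (((2*m)‼ : ℕ) : ℝ) * S * (((q+2*m)‼ : ℕ) : ℝ) * Jm (q+1)
        = c * V * Jm (q+1) * ((q‼ : ℕ) : ℝ) := by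
      field_simp at hiter
      linear_combination Jm (q+1) * hiter
    have h3 : (((2*m)‼ : ℕ) : ℝ) * S * (((q+2*m)‼ : ℕ) : ℝ) = c * V * ((q‼ : ℕ) : ℝ) :=
      mul_right_cancel₀ hJ1 (by linear_combination h2)
    linear_combination h3
end

section
/- Applying the Laplacian t times to f_k(x) = Σ_{j=0}^{⌊k/2⌋} |x|^{2j} h_{k-2j}(x) (with h_{k-2j} harmonic homogeneous of degree k-2j) gives Δ^t f_k(x) = Σ_{j=t}^{⌊k/2⌋} [(2j)!! (n+2k-2j-2)!! / ((2j-2t)!! (n+2k-2j-2t-2)!!)] · |x|^{2(j-t)} h_{k-2j}(x). -/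
open MvPolynomial Finset Nat

noncomputable def LapS (n : ℕ) : MvPolynomial (Fin n) ℂ := ∑ i : Fin n, X i ^ 2

noncomputable def Lap {n : ℕ} (g : MvPolynomial (Fin n) ℂ) : MvPolynomial (Fin n) ℂ :=
  ∑ i : Fin n, pderiv i (pderiv i g)

lemma Lap_smul {n : ℕ} (c : ℂ) (g : MvPolynomial (Fin n) ℂ) : Lap (c • g) = c • Lap g := by
  simp [Lap, Finset.smul_sum]

lemma Lap_sum {n : ℕ} {ι : Type*} (s : Finset ι) (f : ι → MvPolynomial (Fin n) ℂ) :
    Lap (∑ j ∈ s, f j) = ∑ j ∈ s, Lap (f j) := by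
  simp only [Lap, map_sum]
  exact Finset.sum_comm

lemma euler {n d : ℕ} {p : MvPolynomial (Fin n) ℂ} (hp : p.IsHomogeneous d) :
    ∑ i : Fin n, X i * pderiv i p = ((d : ℕ) : ℂ) • p := by
  have key : ∀ s ∈ p.support,
      ∑ i : Fin n, X i * pderiv i (monomial s (coeff s p)) = ((d : ℕ) : ℂ) • monomial s (coeff s p) := by
    intro s hs
    have hdeg : (∑ i : Fin n, (s i : ℂ)) = (d : ℂ) := by
      have h1 := hp (mem_support_iff.mp hs)
      have h2 : Finsupp.weight 1 s = ∑ i : Fin n, s i := by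
        rw [show (Finsupp.weight 1 : (Fin n →₀ ℕ) →+ ℕ) = Finsupp.weight (fun _ => 1) from rfl,
          ← Finsupp.degree_eq_weight_one, Finsupp.degree]
        exact Finset.sum_subset (Finset.subset_univ _)
          (fun x _ hx => by simpa using Finsupp.notMem_support_iff.mp hx)
      rw [← h1, h2]
      push_cast
      rfl
    have hterm : ∀ i : Fin n, X i * pderiv i (monomial s (coeff s p)) =
        ((s i : ℕ) : ℂ) • monomial s (coeff s p) := by
      intro i
      rw [pderiv_monomial]
      by_cases h0 : s i = 0
      · simp [h0]
      · have hsub : Finsupp.single i 1 + (s - Finsupp.single i 1) = s := by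
          ext j
          simp only [Finsupp.coe_add, Finsupp.coe_tsub, Pi.add_apply, Pi.sub_apply,
            Finsupp.single_apply]
          rcases eq_or_ne i j with rfl | hne
          · simp only [if_pos rfl, ite_true, eq_self_iff_true]
            omega
          · simp [hne]
        rw [show (X i : MvPolynomial (Fin n) ℂ) = X i ^ 1 by ring, ← monomial_single_add, hsub,
          smul_monomial]
        rw [smul_eq_mul]
        ring
    rw [Finset.sum_congr rfl (fun i _ => hterm i), ← Finset.sum_smul, hdeg]
  conv_lhs => rw [p.as_sum]
  simp only [map_sum, Finset.mul_sum]
  rw [Finset.sum_comm, Finset.sum_congr rfl key, ← Finset.smul_sum, ← p.as_sum]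

lemma pderiv_LapS {n : ℕ} (i : Fin n) : pderiv i (LapS n) = 2 * X i := by
  rw [LapS, map_sum]
  rw [Finset.sum_eq_single i]
  · rw [pderiv_pow, pderiv_X_self]; ring
  · intro j _ hj
    rw [pderiv_pow, pderiv_X_of_ne hj]
    ring
  · intro hi; exact absurd (Finset.mem_univ i) hi

lemma pderiv_LapS_pow {n : ℕ} (i : Fin n) (m : ℕ) :
    pderiv i ((LapS n) ^ m) = ((2 * m : ℕ) : ℂ) • ((LapS n) ^ (m - 1) * X i) := by
  rw [pderiv_pow, pderiv_LapS, smul_eq_C_mul]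
  rw [show ((2 * m : ℕ) : ℂ) = 2 * (m : ℕ) by push_cast; ring, map_mul, map_ofNat,
    show ((m : ℕ) : MvPolynomial (Fin n) ℂ) = C ((m : ℕ) : ℂ) by push_cast; rfl]
  ring

lemma coef_step (N x y u v : ℂ) (hx : x ≠ 0) (hy : y ≠ 0) (hu : u ≠ 0) (hv : v ≠ 0) :
    N / (x * u * (y * v)) * (x * y) = N / (u * v) := by
  field_simp

lemma Lap_LapS_pow_mul {n d : ℕ} (m : ℕ) {p : MvPolynomial (Fin n) ℂ}
    (hh : Lap p = 0) (hp : p.IsHomogeneous d) :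
    Lap ((LapS n) ^ (m + 1) * p)
      = ((2 * (m + 1) * (n + 2 * d + 2 * m) : ℕ) : ℂ) • ((LapS n) ^ m * p) := by
  have cm : ((m : ℕ) : MvPolynomial (Fin n) ℂ) = C ((m : ℕ) : ℂ) := by push_cast; rfl
  have key : ∀ i : Fin n, pderiv i (pderiv i ((LapS n) ^ (m + 1) * p)) =
      ((4 * m * (m + 1) : ℕ) : ℂ) • ((LapS n) ^ (m - 1) * (X i ^ 2 * p))
      + ((2 * (m + 1) : ℕ) : ℂ) • ((LapS n) ^ m * p)
      + ((4 * (m + 1) : ℕ) : ℂ) • ((LapS n) ^ m * (X i * pderiv i p))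
      + (LapS n) ^ (m + 1) * pderiv i (pderiv i p) := by
    intro i
    simp only [pderiv_mul, pderiv_LapS_pow, Nat.add_sub_cancel, map_add,
      Derivation.map_smul, pderiv_X_self, smul_mul_assoc]
    simp only [smul_eq_C_mul]
    push_cast
    simp only [map_mul, map_add, map_ofNat, map_one, ← cm]
    ring
  rw [show Lap ((LapS n) ^ (m + 1) * p)
      = ∑ i : Fin n, pderiv i (pderiv i ((LapS n) ^ (m + 1) * p)) from rfl]
  rw [Finset.sum_congr rfl (fun i _ => key i)]
  rw [Finset.sum_add_distrib, Finset.sum_add_distrib, Finset.sum_add_distrib]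
  have e1 : ∑ i : Fin n, ((4 * m * (m + 1) : ℕ) : ℂ) • ((LapS n) ^ (m - 1) * (X i ^ 2 * p))
      = ((4 * m * (m + 1) : ℕ) : ℂ) • ((LapS n) ^ (m - 1) * (LapS n * p)) := by
    rw [← Finset.smul_sum, ← Finset.mul_sum, ← Finset.sum_mul]
    rfl
  have e2 : ∑ _i : Fin n, ((2 * (m + 1) : ℕ) : ℂ) • ((LapS n) ^ m * p)
      = ((n * (2 * (m + 1)) : ℕ) : ℂ) • ((LapS n) ^ m * p) := by
    rw [Finset.sum_const, Finset.card_univ, Fintype.card_fin,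
      ← Nat.cast_smul_eq_nsmul ℂ, smul_smul, ← Nat.cast_mul]
  have e3 : ∑ i : Fin n, ((4 * (m + 1) : ℕ) : ℂ) • ((LapS n) ^ m * (X i * pderiv i p))
      = ((4 * (m + 1) * d : ℕ) : ℂ) • ((LapS n) ^ m * p) := by
    rw [← Finset.smul_sum, ← Finset.mul_sum, euler hp, mul_smul_comm, smul_smul, ← Nat.cast_mul]
  have e4 : ∑ i : Fin n, (LapS n) ^ (m + 1) * pderiv i (pderiv i p) = 0 := by
    rw [← Finset.mul_sum, show (∑ i : Fin n, pderiv i (pderiv i p)) = Lap p from rfl, hh, mul_zero]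
  rw [e1, e2, e3, e4, add_zero]
  have e5 : ((4 * m * (m + 1) : ℕ) : ℂ) • ((LapS n) ^ (m - 1) * (LapS n * p))
      = ((4 * m * (m + 1) : ℕ) : ℂ) • ((LapS n) ^ m * p) := by
    cases m with
    | zero => simp
    | succ m' =>
      rw [Nat.add_sub_cancel]
      congr 1
      ring
  rw [e5, ← add_smul, ← add_smul, ← Nat.cast_add, ← Nat.cast_add]
  congr 2
  ring

/-- Applying the Laplacian `t` times to a harmonic decomposition
`f = ∑_{j=0}^{⌊k/2⌋} |x|^{2j} h_{k-2j}` gives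
`Δᵗ f = ∑_{j=t}^{⌊k/2⌋} ((2j)‼ (n+2k-2j-2)‼ / ((2j-2t)‼ (n+2k-2j-2t-2)‼)) |x|^{2(j-t)} h_{k-2j}`. -/
theorem laplacian_iterate_harmonic_decomposition (n k t : ℕ) (hn : 2 ≤ n)
    (h : ℕ → MvPolynomial (Fin n) ℂ)
    (hharm : ∀ j ≤ k / 2, (∑ i : Fin n, pderiv i (pderiv i (h j))) = 0)
    (hhom : ∀ j ≤ k / 2, (h j).IsHomogeneous (k - 2 * j)) :
    (fun g : MvPolynomial (Fin n) ℂ =>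
        ∑ i : Fin n, pderiv i (pderiv i g))^[t]
      (∑ j ∈ Finset.range (k / 2 + 1), (∑ i : Fin n, X i ^ 2) ^ j * h j)
    = ∑ j ∈ Finset.Icc t (k / 2),
        ((((2 * j)‼ * (n + 2 * k - 2 * j - 2)‼ : ℕ) : ℂ) /
            (((2 * j - 2 * t)‼ * (n + 2 * k - 2 * j - 2 * t - 2)‼ : ℕ) : ℂ)) •
          ((∑ i : Fin n, X i ^ 2) ^ (j - t) * h j) := by
  induction t with
  | zero =>
    rw [Function.iterate_zero_apply, ← Finset.Ico_add_one_right_eq_Icc, Nat.Ico_zero_eq_range]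
    refine Finset.sum_congr rfl fun j hj => ?_
    simp only [Nat.mul_zero, Nat.sub_zero]
    rw [div_self, one_smul]
    exact Nat.cast_ne_zero.mpr (Nat.mul_ne_zero (Nat.doubleFactorial_pos _).ne'
      (Nat.doubleFactorial_pos _).ne')
  | succ t IH =>
    rw [Function.iterate_succ_apply', IH]
    show Lap _ = _
    rw [show (∑ i : Fin n, X i ^ 2 : MvPolynomial (Fin n) ℂ) = LapS n from rfl] at *
    rw [Lap_sum]
    rw [← Finset.sum_subset (Finset.Icc_subset_Icc_left (Nat.le_succ t)) ?side]
    · refine Finset.sum_congr rfl fun j hj => ?_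
      rw [Finset.mem_Icc] at hj
      obtain ⟨hj1, hj2⟩ := hj
      have h2j : 2 * j ≤ k := by
        have := Nat.div_mul_le_self k 2
        omega
      rw [Lap_smul, show j - t = (j - (t + 1)) + 1 by omega,
        Lap_LapS_pow_mul (j - (t + 1)) (hharm j hj2) (hhom j hj2), smul_smul]
      congr 1
      -- coefficient identity
      have ha : 2 * j - 2 * t = (2 * j - 2 * (t + 1)) + 2 := by omega
      have hb : n + 2 * k - 2 * j - 2 * t - 2
          = (n + 2 * k - 2 * j - 2 * (t + 1) - 2) + 2 := by omega
      have hM1 : 2 * (j - (t + 1) + 1) = (2 * j - 2 * (t + 1)) + 2 := by omega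
      have hM2 : n + 2 * (k - 2 * j) + 2 * (j - (t + 1))
          = (n + 2 * k - 2 * j - 2 * (t + 1) - 2) + 2 := by omega
      have hM : 2 * (j - (t + 1) + 1) * (n + 2 * (k - 2 * j) + 2 * (j - (t + 1)))
          = ((2 * j - 2 * (t + 1)) + 2) * ((n + 2 * k - 2 * j - 2 * (t + 1) - 2) + 2) := by
        rw [hM1, hM2]
      rw [hM, ha, hb, Nat.doubleFactorial_add_two, Nat.doubleFactorial_add_two]
      have hx : (((2 * j - 2 * (t + 1) + 2 : ℕ) : ℂ)) ≠ 0 :=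
        Nat.cast_ne_zero.mpr (by omega)
      have hy : (((n + 2 * k - 2 * j - 2 * (t + 1) - 2 + 2 : ℕ) : ℂ)) ≠ 0 :=
        Nat.cast_ne_zero.mpr (by omega)
      have hu : (((2 * j - 2 * (t + 1))‼ : ℕ) : ℂ) ≠ 0 :=
        Nat.cast_ne_zero.mpr (Nat.doubleFactorial_pos _).ne'
      have hv : (((n + 2 * k - 2 * j - 2 * (t + 1) - 2)‼ : ℕ) : ℂ) ≠ 0 :=
        Nat.cast_ne_zero.mpr (Nat.doubleFactorial_pos _).ne'
      simp only [Nat.cast_mul]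
      exact coef_step _ _ _ _ _ hx hy hu hv
    · intro x hx hx'
      rw [Finset.mem_Icc] at hx
      rw [Finset.mem_Icc] at hx'
      have hxt : x = t := by omega
      subst hxt
      have h0 : Lap (h x) = 0 := hharm x hx.2
      simp [Nat.sub_self, Lap_smul, h0]
end

section
/- The integral over the unit sphere S^{2n-1} ⊂ ℝ^{2n} of (Σ_{i=1}^n (x_i² + y_i²)²)² equals (4(n+5) / ((n+1)(n+2)(n+3))) · vol(S^{2n-1}). -/
open Finset Metric MeasureTheory Real Set

noncomputable section
namespace SphereH8Aux


lemma integrable_J (m : ℕ) : Integrable (fun t : ℝ => t ^ m * Real.exp (-t ^ 2)) := by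
  have h := integrable_rpow_mul_exp_neg_mul_sq (b := 1) one_pos (s := (m : ℝ))
    (by exact lt_of_lt_of_le (by norm_num) (Nat.cast_nonneg m))
  simpa [Real.rpow_natCast] using h

/-- The 1D Gaussian moment. -/
def J (m : ℕ) : ℝ := ∫ t : ℝ, t ^ m * Real.exp (-t ^ 2)

lemma integral_Ioi_pow_exp (m : ℕ) :
    ∫ r in Ioi (0 : ℝ), r ^ m * Real.exp (-r ^ 2)
      = (1 / 2) * Real.Gamma (((m : ℝ) + 1) / 2) := by
  have e2 : ∀ t : ℝ, t ^ ((2 : ℝ)) = t ^ (2 : ℕ) := fun t => by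
    rw [show (2 : ℝ) = ((2 : ℕ) : ℝ) by norm_num, Real.rpow_natCast]
  have em : ∀ t : ℝ, t ^ ((m : ℝ)) = t ^ m := fun t => Real.rpow_natCast t m
  have h := integral_rpow_mul_exp_neg_rpow (p := 2) (q := (m : ℝ)) (by norm_num)
    (by exact lt_of_lt_of_le (by norm_num) (Nat.cast_nonneg _))
  simp only [e2, em] at h
  rw [h]

lemma J_even (m : ℕ) : J (2 * m) = Real.Gamma ((m : ℝ) + 1 / 2) := by
  have h1 : J (2 * m) = 2 * ∫ t in Ioi (0 : ℝ), t ^ (2 * m) * Real.exp (-t ^ 2) := by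
    rw [J, ← integral_comp_abs (f := fun t => t ^ (2 * m) * Real.exp (-t ^ 2))]
    congr 1
    funext t
    rw [pow_mul, pow_mul, sq_abs]
  rw [h1, integral_Ioi_pow_exp, show (((2 * m : ℕ) : ℝ) + 1) / 2 = (m : ℝ) + 1 / 2 by
    push_cast; ring]
  ring

lemma J_zero : J 0 = Real.sqrt π := by
  have h := J_even 0
  rw [show ((0 : ℕ) : ℝ) + 1 / 2 = 1 / 2 by norm_num, Real.Gamma_one_half_eq] at h
  simpa using h

lemma J_two : J 2 = Real.sqrt π * (1 / 2) := by
  have h := J_even 1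
  rw [show ((1 : ℕ) : ℝ) + 1 / 2 = 1 / 2 + 1 by norm_num, Real.Gamma_add_one (by norm_num),
    Real.Gamma_one_half_eq] at h
  have : J 2 = J (2 * 1) := by norm_num
  rw [this, h]; ring

lemma J_four : J 4 = Real.sqrt π * (3 / 4) := by
  have h := J_even 2
  rw [show ((2 : ℕ) : ℝ) + 1 / 2 = (1 / 2 + 1) + 1 by norm_num, Real.Gamma_add_one (by norm_num),
    Real.Gamma_add_one (by norm_num), Real.Gamma_one_half_eq] at h
  have : J 4 = J (2 * 2) := by norm_num
  rw [this, h]; ring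

lemma J_six : J 6 = Real.sqrt π * (15 / 8) := by
  have h := J_even 3
  rw [show ((3 : ℕ) : ℝ) + 1 / 2 = ((1 / 2 + 1) + 1) + 1 by norm_num,
    Real.Gamma_add_one (by norm_num), Real.Gamma_add_one (by norm_num),
    Real.Gamma_add_one (by norm_num), Real.Gamma_one_half_eq] at h
  have : J 6 = J (2 * 3) := by norm_num
  rw [this, h]; ring

lemma J_eight : J 8 = Real.sqrt π * (105 / 16) := by
  have h := J_even 4
  rw [show ((4 : ℕ) : ℝ) + 1 / 2 = (((1 / 2 + 1) + 1) + 1) + 1 by norm_num,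
    Real.Gamma_add_one (by norm_num), Real.Gamma_add_one (by norm_num),
    Real.Gamma_add_one (by norm_num), Real.Gamma_add_one (by norm_num),
    Real.Gamma_one_half_eq] at h
  have : J 8 = J (2 * 4) := by norm_num
  rw [this, h]; ring

lemma I_odd (s : ℕ) : ∫ r in Ioi (0 : ℝ), r ^ (2 * s + 1) * Real.exp (-r ^ 2)
    = (Nat.factorial s : ℝ) / 2 := by
  rw [integral_Ioi_pow_exp, show (((2 * s + 1 : ℕ) : ℝ) + 1) / 2 = (s : ℝ) + 1 by
    push_cast; ring, Real.Gamma_nat_eq_factorial]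
  ring



variable {ι : Type*} [Fintype ι]

lemma comp_eq (c : ι → ℕ) :
    (fun y : ι → ℝ =>
        (∏ k, ((MeasurableEquiv.toLp 2 (ι → ℝ)).symm.symm y) k ^ c k) *
          Real.exp (-‖(MeasurableEquiv.toLp 2 (ι → ℝ)).symm.symm y‖ ^ 2))
      = fun y : ι → ℝ => ∏ k, (y k ^ c k * Real.exp (-(y k) ^ 2)) := by
  funext y
  have hy : ∀ k, ((MeasurableEquiv.toLp 2 (ι → ℝ)).symm.symm y) k = y k := fun k => rfl
  have hnorm : ‖(MeasurableEquiv.toLp 2 (ι → ℝ)).symm.symm y‖ ^ 2 = ∑ k, (y k) ^ 2 := by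
    rw [EuclideanSpace.norm_eq, Real.sq_sqrt (by positivity)]
    simp [hy, sq_abs]
  simp only [hy, hnorm]
  rw [← Finset.sum_neg_distrib, Real.exp_sum, ← Finset.prod_mul_distrib]

lemma integral_monomial (c : ι → ℕ) :
    ∫ x : EuclideanSpace ℝ ι, (∏ k, x k ^ c k) * Real.exp (-‖x‖ ^ 2)
      = ∏ k, J (c k) := by
  have hmp := (EuclideanSpace.volume_preserving_symm_measurableEquiv_toLp ι).symm
  rw [← hmp.integral_comp (MeasurableEquiv.measurableEmbedding _)
    (fun x : EuclideanSpace ℝ ι => (∏ k, x k ^ c k) * Real.exp (-‖x‖ ^ 2))]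
  rw [show (fun y : ι → ℝ => (∏ k, ((MeasurableEquiv.toLp 2 (ι → ℝ)).symm.symm y) k ^ c k) *
        Real.exp (-‖(MeasurableEquiv.toLp 2 (ι → ℝ)).symm.symm y‖ ^ 2))
      = fun y : ι → ℝ => ∏ k, (y k ^ c k * Real.exp (-(y k) ^ 2)) from comp_eq c]
  exact integral_fintype_prod_eq_prod (ι := ι) (fun k (t : ℝ) => t ^ c k * Real.exp (-t ^ 2))

lemma integrable_monomial (c : ι → ℕ) :
    Integrable (fun x : EuclideanSpace ℝ ι => (∏ k, x k ^ c k) * Real.exp (-‖x‖ ^ 2)) := by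
  have hmp := (EuclideanSpace.volume_preserving_symm_measurableEquiv_toLp ι).symm
  rw [← hmp.integrable_comp_emb (MeasurableEquiv.measurableEmbedding _)]
  have : ((fun x : EuclideanSpace ℝ ι => (∏ k, x k ^ c k) * Real.exp (-‖x‖ ^ 2)) ∘
      (MeasurableEquiv.toLp 2 (ι → ℝ)).symm.symm)
      = fun y : ι → ℝ => ∏ k, (y k ^ c k * Real.exp (-(y k) ^ 2)) := comp_eq c
  rw [this]
  exact Integrable.fintype_prod (fun k => integrable_J (c k))



lemma polar {E : Type*} [NormedAddCommGroup E] [NormedSpace ℝ E] [MeasurableSpace E]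
    [BorelSpace E] [FiniteDimensional ℝ E] [Nontrivial E]
    (μ : Measure E) [μ.IsAddHaarMeasure] (k : ℕ) (g : E → ℝ)
    (hg : ∀ (r : ℝ), 0 < r → ∀ x, g (r • x) = r ^ k * g x) :
    ∫ x, g x * Real.exp (-‖x‖ ^ 2) ∂μ
      = (∫ ω : sphere (0 : E) 1, g ω ∂μ.toSphere) *
        ∫ r in Ioi (0 : ℝ), r ^ (Module.finrank ℝ E - 1 + k) * Real.exp (-r ^ 2) := by
  set d := Module.finrank ℝ E with hd
  calc
    ∫ x, g x * Real.exp (-‖x‖ ^ 2) ∂μ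
        = ∫ x : ({0}ᶜ : Set E), g x.1 * Real.exp (-‖x.1‖ ^ 2) ∂(μ.comap Subtype.val) := by
          rw [integral_subtype_comap (measurableSet_singleton (0:E)).compl
            (fun x => g x * Real.exp (-‖x‖ ^ 2)), MeasureTheory.restrict_compl_singleton]
    _ = ∫ p : sphere (0 : E) 1 × Ioi (0 : ℝ),
          g (p.1 : E) * ((p.2 : ℝ) ^ k * Real.exp (-(p.2 : ℝ) ^ 2))
          ∂(μ.toSphere.prod (Measure.volumeIoiPow (d - 1))) := by
          rw [← (μ.measurePreserving_homeomorphUnitSphereProd).integral_comp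
            (Homeomorph.measurableEmbedding _)
            (fun p : sphere (0 : E) 1 × Ioi (0 : ℝ) =>
              g (p.1 : E) * ((p.2 : ℝ) ^ k * Real.exp (-(p.2 : ℝ) ^ 2)))]
          refine integral_congr_ae (Filter.Eventually.of_forall fun x => ?_)
          have hx : (x : E) ≠ 0 := x.2
          have hn : (0:ℝ) < ‖(x : E)‖ := norm_pos_iff.2 hx
          simp only [homeomorphUnitSphereProd_apply_fst_coe,
            homeomorphUnitSphereProd_apply_snd_coe]
          have : g ((x:E)) = ‖(x:E)‖ ^ k * g (‖(x:E)‖⁻¹ • (x:E)) := by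
            rw [← hg _ hn, smul_inv_smul₀ hn.ne']
          rw [this]; ring
    _ = (∫ ω : sphere (0 : E) 1, g ω ∂μ.toSphere) *
          ∫ r : Ioi (0 : ℝ), ((r : ℝ) ^ k * Real.exp (-(r : ℝ) ^ 2))
            ∂(Measure.volumeIoiPow (d - 1)) :=
          integral_prod_mul (fun ω : sphere (0 : E) 1 => g ω)
            (fun r : Ioi (0 : ℝ) => (r : ℝ) ^ k * Real.exp (-(r : ℝ) ^ 2))
    _ = (∫ ω : sphere (0 : E) 1, g ω ∂μ.toSphere) *
          ∫ r in Ioi (0 : ℝ), r ^ (d - 1 + k) * Real.exp (-r ^ 2) := by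
          congr 1
          rw [Measure.volumeIoiPow]
          simp only [ENNReal.ofReal]
          rw [integral_withDensity_eq_integral_smul
            ((measurable_subtype_coe.pow_const _).real_toNNReal)]
          rw [integral_subtype_comap measurableSet_Ioi
            (fun r : ℝ => (r ^ (d - 1)).toNNReal • (r ^ k * Real.exp (-r ^ 2)))]
          refine setIntegral_congr_fun measurableSet_Ioi (fun r hr => ?_)
          have hr0 : (0:ℝ) ≤ r := (le_of_lt hr)
          rw [NNReal.smul_def, Real.coe_toNNReal _ (pow_nonneg hr0 _), smul_eq_mul, pow_add]
          ring



def Q (m : ℕ) : ℝ := J m / Real.sqrt π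

lemma sqrtpi_pos : (0:ℝ) < Real.sqrt π := Real.sqrt_pos.mpr pi_pos

lemma J_eq_Q (m : ℕ) : J m = Real.sqrt π * Q m := by
  rw [Q, mul_div_cancel₀ _ sqrtpi_pos.ne']

lemma Q_zero : Q 0 = 1 := by rw [Q, J_zero, div_self sqrtpi_pos.ne']
lemma Q_two : Q 2 = 1 / 2 := by rw [Q, J_two]; field_simp
lemma Q_four : Q 4 = 3 / 4 := by rw [Q, J_four]; field_simp
lemma Q_six : Q 6 = 15 / 8 := by rw [Q, J_six]; field_simp
lemma Q_eight : Q 8 = 105 / 16 := by rw [Q, J_eight]; field_simp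

variable {n : ℕ}

/-- Exponent function of the monomials appearing in the expansion. -/
def ee (i j : Fin n) (m l : ℕ) : Fin n ⊕ Fin n → ℕ := fun k =>
  (if k = Sum.inl i then 2 * m else 0) + (if k = Sum.inr i then 4 - 2 * m else 0) +
  ((if k = Sum.inl j then 2 * l else 0) + (if k = Sum.inr j then 4 - 2 * l else 0))

lemma prod_pow_single (x : (Fin n ⊕ Fin n) → ℝ) (a : Fin n ⊕ Fin n) (v : ℕ) :
    ∏ k, x k ^ (if k = a then v else 0) = x a ^ v := by
  have h : ∀ k, x k ^ (if k = a then v else 0) = if k = a then x k ^ v else 1 := by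
    intro k; split <;> simp
  simp_rw [h]
  simp [Finset.prod_ite_eq' Finset.univ a (fun k => x k ^ v)]

lemma monomial_eq (x : EuclideanSpace ℝ (Fin n ⊕ Fin n)) (i j : Fin n) (m l : ℕ) :
    ∏ k, x k ^ ee i j m l k
      = (x (Sum.inl i) ^ (2 * m) * x (Sum.inr i) ^ (4 - 2 * m)) *
        (x (Sum.inl j) ^ (2 * l) * x (Sum.inr j) ^ (4 - 2 * l)) := by
  simp only [ee, pow_add, Finset.prod_mul_distrib, prod_pow_single]

lemma prod_Q_off (i j : Fin n) (m l : ℕ) :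
    ∏ k, Q (ee i j m l k)
      = ∏ k ∈ ({Sum.inl i, Sum.inr i, Sum.inl j, Sum.inr j} : Finset (Fin n ⊕ Fin n)),
          Q (ee i j m l k) := by
  symm
  refine Finset.prod_subset (Finset.subset_univ _) (fun k _ hk => ?_)
  simp only [Finset.mem_insert, Finset.mem_singleton, not_or] at hk
  obtain ⟨h1, h2, h3, h4⟩ := hk
  simp [ee, h1, h2, h3, h4, Q_zero]

lemma prod_Q_ne {i j : Fin n} (hij : i ≠ j) (m l : ℕ) :
    ∏ k, Q (ee i j m l k)
      = (Q (2 * m) * Q (4 - 2 * m)) * (Q (2 * l) * Q (4 - 2 * l)) := by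
  have h1 : (Sum.inl i : Fin n ⊕ Fin n)
      ∉ ({Sum.inr i, Sum.inl j, Sum.inr j} : Finset (Fin n ⊕ Fin n)) := by simp [hij]
  have h2 : (Sum.inr i : Fin n ⊕ Fin n)
      ∉ ({Sum.inl j, Sum.inr j} : Finset (Fin n ⊕ Fin n)) := by simp [hij]
  have h3 : (Sum.inl j : Fin n ⊕ Fin n) ∉ ({Sum.inr j} : Finset (Fin n ⊕ Fin n)) := by simp
  rw [prod_Q_off, Finset.prod_insert h1, Finset.prod_insert h2, Finset.prod_insert h3,
    Finset.prod_singleton]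
  have e1 : ee i j m l (Sum.inl i) = 2 * m := by simp [ee, hij]
  have e2 : ee i j m l (Sum.inr i) = 4 - 2 * m := by simp [ee, hij]
  have e3 : ee i j m l (Sum.inl j) = 2 * l := by simp [ee, Ne.symm hij]
  have e4 : ee i j m l (Sum.inr j) = 4 - 2 * l := by simp [ee, Ne.symm hij]
  rw [e1, e2, e3, e4]; ring

lemma prod_Q_diag (i : Fin n) (m l : ℕ) :
    ∏ k, Q (ee i i m l k) = Q (2 * m + 2 * l) * Q ((4 - 2 * m) + (4 - 2 * l)) := by
  rw [prod_Q_off]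
  have hS : ({Sum.inl i, Sum.inr i, Sum.inl i, Sum.inr i} : Finset (Fin n ⊕ Fin n))
      = {Sum.inl i, Sum.inr i} := by
    ext k; simp
  rw [hS, Finset.prod_insert (by simp), Finset.prod_singleton]
  have e1 : ee i i m l (Sum.inl i) = 2 * m + 2 * l := by simp [ee]
  have e2 : ee i i m l (Sum.inr i) = (4 - 2 * m) + (4 - 2 * l) := by simp [ee]
  rw [e1, e2]

lemma sum_ne_val {i j : Fin n} (hij : i ≠ j) :
    ∑ m ∈ Finset.range 3, ∑ l ∈ Finset.range 3,
      ((Nat.choose 2 m : ℝ) * (Nat.choose 2 l)) * ∏ k, Q (ee i j m l k) = 4 := by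
  simp_rw [prod_Q_ne hij]
  simp [Finset.sum_range_succ]
  norm_num [Q_zero, Q_two, Q_four]

lemma sum_diag_val (i : Fin n) :
    ∑ m ∈ Finset.range 3, ∑ l ∈ Finset.range 3,
      ((Nat.choose 2 m : ℝ) * (Nat.choose 2 l)) * ∏ k, Q (ee i i m l k) = 24 := by
  simp_rw [prod_Q_diag]
  simp [Finset.sum_range_succ]
  norm_num [Q_zero, Q_two, Q_four, Q_six, Q_eight]


/-- The degree-8 homogeneous polynomial. -/
def gfun (n : ℕ) : EuclideanSpace ℝ (Fin n ⊕ Fin n) → ℝ := fun x =>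
  (∑ i : Fin n, (x (Sum.inl i) ^ 2 + x (Sum.inr i) ^ 2) ^ 2) ^ 2

lemma g_expand (x : EuclideanSpace ℝ (Fin n ⊕ Fin n)) :
    gfun n x * Real.exp (-‖x‖ ^ 2)
      = ∑ i : Fin n, ∑ j : Fin n, ∑ m ∈ Finset.range 3, ∑ l ∈ Finset.range 3,
          ((Nat.choose 2 m : ℝ) * (Nat.choose 2 l)) *
            ((∏ k, x k ^ ee i j m l k) * Real.exp (-‖x‖ ^ 2)) := by
  have hsq : ∀ i : Fin n,
      (x (Sum.inl i) ^ 2 + x (Sum.inr i) ^ 2) ^ 2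
        = ∑ m ∈ Finset.range 3,
            x (Sum.inl i) ^ (2 * m) * x (Sum.inr i) ^ (4 - 2 * m) * (Nat.choose 2 m : ℝ) := by
    intro i
    rw [add_pow]
    refine Finset.sum_congr rfl fun m hm => ?_
    have hm2 : m ≤ 2 := Nat.lt_succ_iff.mp (Finset.mem_range.mp hm)
    have h1 : (x (Sum.inl i) ^ 2) ^ m = x (Sum.inl i) ^ (2 * m) := by rw [← pow_mul]
    have h2 : (x (Sum.inr i) ^ 2) ^ (2 - m) = x (Sum.inr i) ^ (4 - 2 * m) := by
      rw [← pow_mul]; congr 1; omega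
    rw [h1, h2]
  rw [gfun, pow_two, Finset.sum_mul_sum, Finset.sum_mul]
  refine Finset.sum_congr rfl fun i _ => ?_
  rw [Finset.sum_mul]
  refine Finset.sum_congr rfl fun j _ => ?_
  rw [hsq i, hsq j, Finset.sum_mul_sum, Finset.sum_mul]
  refine Finset.sum_congr rfl fun m _ => ?_
  rw [Finset.sum_mul]
  refine Finset.sum_congr rfl fun l _ => ?_
  rw [monomial_eq]
  ring

lemma prod_J_Q (c : Fin n ⊕ Fin n → ℕ) :
    ∏ k, J (c k) = Real.sqrt π ^ (n + n) * ∏ k, Q (c k) := by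
  simp_rw [J_eq_Q]
  rw [Finset.prod_mul_distrib, Finset.prod_const, Finset.card_univ]
  congr 2
  simp

lemma sqrt_pi_pow (n : ℕ) : Real.sqrt π ^ (n + n) = π ^ n := by
  rw [← two_mul, pow_mul, Real.sq_sqrt pi_pos.le]

lemma A_val (n : ℕ) :
    ∫ x : EuclideanSpace ℝ (Fin n ⊕ Fin n), gfun n x * Real.exp (-‖x‖ ^ 2)
      = π ^ n * (4 * n * (n + 5)) := by
  have hterm : ∀ (i j : Fin n) (m l : ℕ),
      Integrable (fun x : EuclideanSpace ℝ (Fin n ⊕ Fin n) =>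
        ((Nat.choose 2 m : ℝ) * (Nat.choose 2 l)) *
          ((∏ k, x k ^ ee i j m l k) * Real.exp (-‖x‖ ^ 2))) :=
    fun i j m l => (integrable_monomial _).const_mul _
  have hfe : (fun x : EuclideanSpace ℝ (Fin n ⊕ Fin n) => gfun n x * Real.exp (-‖x‖ ^ 2))
      = fun x => ∑ i : Fin n, ∑ j : Fin n, ∑ m ∈ Finset.range 3, ∑ l ∈ Finset.range 3,
          ((Nat.choose 2 m : ℝ) * (Nat.choose 2 l)) *
            ((∏ k, x k ^ ee i j m l k) * Real.exp (-‖x‖ ^ 2)) := funext g_expand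
  rw [hfe]
  have step : ∫ x : EuclideanSpace ℝ (Fin n ⊕ Fin n),
        (∑ i : Fin n, ∑ j : Fin n, ∑ m ∈ Finset.range 3, ∑ l ∈ Finset.range 3,
          ((Nat.choose 2 m : ℝ) * (Nat.choose 2 l)) *
            ((∏ k, x k ^ ee i j m l k) * Real.exp (-‖x‖ ^ 2)))
      = ∑ i : Fin n, ∑ j : Fin n, ∑ m ∈ Finset.range 3, ∑ l ∈ Finset.range 3,
          ((Nat.choose 2 m : ℝ) * (Nat.choose 2 l)) * ∏ k, J (ee i j m l k) := by
    rw [integral_finset_sum _ (fun i _ => integrable_finset_sum _ (fun j _ =>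
      integrable_finset_sum _ (fun m _ => integrable_finset_sum _ (fun l _ => hterm i j m l))))]
    refine Finset.sum_congr rfl fun i _ => ?_
    rw [integral_finset_sum _ (fun j _ =>
      integrable_finset_sum _ (fun m _ => integrable_finset_sum _ (fun l _ => hterm i j m l)))]
    refine Finset.sum_congr rfl fun j _ => ?_
    rw [integral_finset_sum _ (fun m _ => integrable_finset_sum _ (fun l _ => hterm i j m l))]
    refine Finset.sum_congr rfl fun m _ => ?_
    rw [integral_finset_sum _ (fun l _ => hterm i j m l)]
    refine Finset.sum_congr rfl fun l _ => ?_
    rw [integral_const_mul, integral_monomial]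
  rw [step]
  have block : ∀ i j : Fin n,
      (∑ m ∈ Finset.range 3, ∑ l ∈ Finset.range 3,
        ((Nat.choose 2 m : ℝ) * (Nat.choose 2 l)) * ∏ k, J (ee i j m l k))
      = Real.sqrt π ^ (n + n) * (if i = j then (24 : ℝ) else 4) := by
    intro i j
    have hre : ∀ (m l : ℕ),
        ((Nat.choose 2 m : ℝ) * (Nat.choose 2 l)) * ∏ k, J (ee i j m l k)
          = Real.sqrt π ^ (n + n) *
            (((Nat.choose 2 m : ℝ) * (Nat.choose 2 l)) * ∏ k, Q (ee i j m l k)) := by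
      intro m l; rw [prod_J_Q]; ring
    simp_rw [hre, ← Finset.mul_sum]
    by_cases h : i = j
    · subst h; rw [if_pos rfl, sum_diag_val]
    · rw [if_neg h, sum_ne_val h]
  simp_rw [block, ← Finset.mul_sum, sqrt_pi_pow]
  have hsum : ∑ i : Fin n, ∑ j : Fin n, (if i = j then (24 : ℝ) else 4)
      = 4 * n ^ 2 + 20 * n := by
    have hrow : ∀ i : Fin n, ∑ j : Fin n, (if i = j then (24 : ℝ) else 4)
        = 20 + 4 * n := by
      intro i
      have h1 : ∀ j : Fin n, (if i = j then (24 : ℝ) else 4)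
          = (if i = j then (20 : ℝ) else 0) + 4 := by intro j; split <;> norm_num
      simp_rw [h1]
      rw [Finset.sum_add_distrib, Finset.sum_ite_eq, if_pos (Finset.mem_univ i),
        Finset.sum_const, Finset.card_univ, Fintype.card_fin]
      simp only [nsmul_eq_mul]
      ring
    simp_rw [hrow]
    rw [Finset.sum_const, Finset.card_univ, Fintype.card_fin, nsmul_eq_mul]
    ring
  rw [hsum]
  ring

end SphereH8Aux
end

open Finset Metric MeasureTheory

/-- `∫_{S^{2n-1}} (∑ᵢ (xᵢ² + yᵢ²)²)² dS = (4(n+5) / ((n+1)(n+2)(n+3))) · vol(S^{2n-1})`,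
where `S^{2n-1}` is the unit sphere in `ℝ^{2n}` with coordinates `x₁,…,xₙ,y₁,…,yₙ`. -/
theorem integral_sphere_H8 (n : ℕ) (hn : 0 < n) :
    ∫ v : sphere (0 : EuclideanSpace ℝ (Fin n ⊕ Fin n)) 1,
        (∑ i : Fin n,
            (((v : EuclideanSpace ℝ (Fin n ⊕ Fin n)) (Sum.inl i)) ^ 2 +
              ((v : EuclideanSpace ℝ (Fin n ⊕ Fin n)) (Sum.inr i)) ^ 2) ^ 2) ^ 2
      ∂((volume : Measure (EuclideanSpace ℝ (Fin n ⊕ Fin n))).toSphere)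
    = 4 * (n + 5) / ((n + 1) * (n + 2) * (n + 3)) *
        (((volume : Measure (EuclideanSpace ℝ (Fin n ⊕ Fin n))).toSphere Set.univ).toReal) := by
  classical
  have hnt : Nontrivial (EuclideanSpace ℝ (Fin n ⊕ Fin n)) := by
    refine Module.nontrivial_of_finrank_pos (R := ℝ) ?_
    rw [finrank_euclideanSpace]
    simp only [Fintype.card_sum, Fintype.card_fin]
    omega
  have hdim : Module.finrank ℝ (EuclideanSpace ℝ (Fin n ⊕ Fin n)) = n + n := by
    rw [finrank_euclideanSpace]; simp
  have hghom : ∀ (r : ℝ), 0 < r → ∀ x : EuclideanSpace ℝ (Fin n ⊕ Fin n),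
      SphereH8Aux.gfun n (r • x) = r ^ 8 * SphereH8Aux.gfun n x := by
    intro r hr x
    simp only [SphereH8Aux.gfun]
    have hcoord : ∀ k : Fin n ⊕ Fin n, (r • x) k = r * x k := fun k => rfl
    simp_rw [hcoord]
    have h4 : ∀ i : Fin n, ((r * x (Sum.inl i)) ^ 2 + (r * x (Sum.inr i)) ^ 2) ^ 2
        = r ^ 4 * ((x (Sum.inl i)) ^ 2 + (x (Sum.inr i)) ^ 2) ^ 2 := fun i => by ring
    simp_rw [h4, ← Finset.mul_sum, mul_pow]
    ring
  have h8 := SphereH8Aux.polar (volume : Measure (EuclideanSpace ℝ (Fin n ⊕ Fin n))) 8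
    (SphereH8Aux.gfun n) hghom
  have h0 := SphereH8Aux.polar (volume : Measure (EuclideanSpace ℝ (Fin n ⊕ Fin n))) 0
    (fun _ => (1 : ℝ)) (fun r hr x => by simp)
  rw [hdim] at h8 h0
  rw [show n + n - 1 + 8 = 2 * (n + 3) + 1 by omega, SphereH8Aux.I_odd] at h8
  rw [show n + n - 1 + 0 = 2 * (n - 1) + 1 by omega, SphereH8Aux.I_odd] at h0
  rw [SphereH8Aux.A_val n] at h8
  have hB : ∫ x : EuclideanSpace ℝ (Fin n ⊕ Fin n), (1 : ℝ) * Real.exp (-‖x‖ ^ 2) = Real.pi ^ n := by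
    have h := SphereH8Aux.integral_monomial (ι := Fin n ⊕ Fin n) (fun _ => 0)
    simp only [pow_zero, Finset.prod_const_one] at h
    rw [h, Finset.prod_const, SphereH8Aux.J_zero, Finset.card_univ]
    have hc : Fintype.card (Fin n ⊕ Fin n) = n + n := by simp
    rw [hc, SphereH8Aux.sqrt_pi_pow]
  rw [hB] at h0
  have hσ : ∫ ω : sphere (0 : EuclideanSpace ℝ (Fin n ⊕ Fin n)) 1, (1 : ℝ)
      ∂((volume : Measure (EuclideanSpace ℝ (Fin n ⊕ Fin n))).toSphere)
      = (((volume : Measure (EuclideanSpace ℝ (Fin n ⊕ Fin n))).toSphere Set.univ).toReal) := by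
    rw [integral_const]; simp [Measure.real]
  rw [hσ] at h0
  have hgoal : (∫ v : sphere (0 : EuclideanSpace ℝ (Fin n ⊕ Fin n)) 1,
      (∑ i : Fin n,
          (((v : EuclideanSpace ℝ (Fin n ⊕ Fin n)) (Sum.inl i)) ^ 2 +
            ((v : EuclideanSpace ℝ (Fin n ⊕ Fin n)) (Sum.inr i)) ^ 2) ^ 2) ^ 2
      ∂((volume : Measure (EuclideanSpace ℝ (Fin n ⊕ Fin n))).toSphere))
      = ∫ ω : sphere (0 : EuclideanSpace ℝ (Fin n ⊕ Fin n)) 1, SphereH8Aux.gfun n ω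
          ∂((volume : Measure (EuclideanSpace ℝ (Fin n ⊕ Fin n))).toSphere) := rfl
  rw [hgoal]
  set S := ∫ ω : sphere (0 : EuclideanSpace ℝ (Fin n ⊕ Fin n)) 1, SphereH8Aux.gfun n ω
      ∂((volume : Measure (EuclideanSpace ℝ (Fin n ⊕ Fin n))).toSphere) with hSdef
  set σ := (((volume : Measure (EuclideanSpace ℝ (Fin n ⊕ Fin n))).toSphere Set.univ).toReal)
    with hσdef
  have hf1 : (0 : ℝ) < ((n - 1).factorial : ℝ) := by
    exact_mod_cast Nat.factorial_pos _
  have hf3 : (0 : ℝ) < ((n + 3).factorial : ℝ) := by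
    exact_mod_cast Nat.factorial_pos _
  have hfac3 : ((n + 3).factorial : ℝ)
      = (n + 3) * (n + 2) * (n + 1) * n * ((n - 1).factorial : ℝ) := by
    have h1 : (n + 3).factorial = (n + 3) * ((n + 2) * ((n + 1) * n.factorial)) := by
      rw [show n + 3 = (n + 2) + 1 from rfl, Nat.factorial_succ,
        show n + 2 = (n + 1) + 1 from rfl, Nat.factorial_succ, Nat.factorial_succ]
    have h2 : n.factorial = n * (n - 1).factorial := (Nat.mul_factorial_pred hn.ne').symm
    rw [h1, h2]
    push_cast
    ring
  have hS : S = Real.pi ^ n * (4 * n * (n + 5)) * 2 / ((n + 3).factorial : ℝ) := by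
    rw [eq_div_iff hf3.ne']
    rw [h8]; ring
  have hσval : σ = Real.pi ^ n * 2 / ((n - 1).factorial : ℝ) := by
    rw [eq_div_iff hf1.ne']
    rw [h0]; ring
  rw [hS, hσval, hfac3]
  have hπ : (0 : ℝ) < Real.pi ^ n := pow_pos Real.pi_pos n
  have hn0 : ((n : ℝ)) ≠ 0 := Nat.cast_ne_zero.mpr hn.ne'
  have hn1 : ((n : ℝ) + 1) ≠ 0 := by positivity
  have hn2 : ((n : ℝ) + 2) ≠ 0 := by positivity
  have hn3 : ((n : ℝ) + 3) ≠ 0 := by positivity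
  field_simp
end
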